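/- Let λ > 0, let u : ℝ → ℝ be a solution of u''(y) = λ²·u(y) for all y (hence u is infinitely differentiable), and let x : [0, 1] → ℝ be four times continuously differentiable with x'(q) > 0 for all q ∈ [0, 1]. Define, for h ∈ (0, 1/2] and q ∈ [h, 1 − h], the consistency error ψ_h(q) := −[ (u(x(q+h)) − u(x(q)))/h₊ − (u(x(q)) − u(x(q−h)))/h₋ ] / ((h₊ + h₋)/2) + λ²·u(x(q)), where h₊ = x(q+h) − x(q) and h₋ = x(q) − x(q−h). Then there exists a constant C > 0 such that for all h ∈ (0, 1/2] and all q ∈ [h, 1 − h], |ψ_h(q) + (h²/3)·( x''(q)·u'''(x(q)) + (1/4)·(x'(q))²·u''''(x(q)) )| ≤ C·h⁴. In particular the central difference scheme on the non-uniform grid generated by x is in general second-order consistent: |ψ_h(q)| ≤ C'·h² uniformly for some C' > 0. -/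

import Mathlib

open Set MeasureTheory intervalIntegral


lemma taylor_bound_within (A B : ℝ) (hAB : A < B) :
    ∀ (n : ℕ) (f : ℝ → ℝ), ContDiffOn ℝ (n + 1 : ℕ) f (Icc A B) →
      ∀ (C X Y : ℝ), X ∈ Icc A B → Y ∈ Icc A B →
        (∀ t ∈ Icc A B, |iteratedDerivWithin (n + 1) f (Icc A B) t| ≤ C) →
        |f Y - ∑ k ∈ Finset.range (n + 1),
            iteratedDerivWithin k f (Icc A B) X * (Y - X) ^ k / k.factorial|
          ≤ C * |Y - X| ^ (n + 1) / (n + 1).factorial := by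
  have hS : UniqueDiffOn ℝ (Icc A B) := uniqueDiffOn_Icc hAB
  intro n
  induction n with
  | zero =>
    intro f hf C X Y hX hY hC
    have hsum : ∑ k ∈ Finset.range (0 + 1),
        iteratedDerivWithin k f (Icc A B) X * (Y - X) ^ k / k.factorial = f X := by
      simp
    rw [hsum]
    have hrhs : C * |Y - X| ^ (0 + 1) / ((0 + 1).factorial : ℝ) = C * |Y - X| := by
      norm_num
    rw [hrhs]
    have := Convex.norm_image_sub_le_of_norm_derivWithin_le (𝕜 := ℝ)
      (hf.differentiableOn (by simp))
      (fun t ht => by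
        rw [Real.norm_eq_abs, ← iteratedDerivWithin_one]
        exact hC t ht) (convex_Icc A B) hX hY
    simpa [Real.norm_eq_abs] using this
  | succ n ih =>
    intro f hf C X Y hX hY hC
    set g := derivWithin f (Icc A B) with hgdef
    have hg : ContDiffOn ℝ (n + 1 : ℕ) g (Icc A B) := by
      apply hf.derivWithin hS
      exact_mod_cast le_refl (n + 2 : ℕ)
    have hgf : ∀ (k : ℕ), ∀ t ∈ Icc A B,
        iteratedDerivWithin k g (Icc A B) t = iteratedDerivWithin (k + 1) f (Icc A B) t :=
      fun k t ht => (congrFun iteratedDerivWithin_succ' t).symm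
    have hCg : ∀ t ∈ Icc A B, |iteratedDerivWithin (n + 1) g (Icc A B) t| ≤ C := by
      intro t ht; rw [hgf (n + 1) t ht]; exact hC t ht
    have IH : ∀ t ∈ Icc A B,
        |g t - ∑ k ∈ Finset.range (n + 1),
          iteratedDerivWithin k g (Icc A B) X * (t - X) ^ k / k.factorial|
        ≤ C * |t - X| ^ (n + 1) / (n + 1).factorial :=
      fun t ht => ih g hg C X t hX ht hCg
    set R : ℝ → ℝ := fun t => f t - ∑ k ∈ Finset.range (n + 2),
        iteratedDerivWithin k f (Icc A B) X * (t - X) ^ k / k.factorial with hR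
    set φ : ℝ → ℝ := fun t => g t - ∑ k ∈ Finset.range (n + 1),
        iteratedDerivWithin k g (Icc A B) X * (t - X) ^ k / k.factorial with hφ
    have hgoal : f Y - ∑ k ∈ Finset.range (n + 1 + 1),
        iteratedDerivWithin k f (Icc A B) X * (Y - X) ^ k / k.factorial = R Y := by
      simp [hR]
    have hRX : R X = 0 := by
      show f X - ∑ k ∈ Finset.range (n + 2),
          iteratedDerivWithin k f (Icc A B) X * (X - X) ^ k / k.factorial = 0
      rw [Finset.sum_eq_single 0 (fun k _ hk => by simp [sub_self, zero_pow hk])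
        (fun h => absurd (Finset.mem_range.mpr (by omega)) h)]
      simp
    have hpc : Continuous (fun t : ℝ => ∑ k ∈ Finset.range (n + 2),
        iteratedDerivWithin k f (Icc A B) X * (t - X) ^ k / k.factorial) := by
      apply continuous_finset_sum
      intro k _
      fun_prop
    have hpc' : Continuous (fun t : ℝ => ∑ k ∈ Finset.range (n + 1),
        iteratedDerivWithin k g (Icc A B) X * (t - X) ^ k / k.factorial) := by
      apply continuous_finset_sum
      intro k _
      fun_prop
    have hRcont : ContinuousOn R (Icc A B) := hf.continuousOn.sub hpc.continuousOn
    have hφcont : ContinuousOn φ (Icc A B) := hg.continuousOn.sub hpc'.continuousOn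
    have hderiv : ∀ t ∈ Ioo A B, HasDerivAt R (φ t) t := by
      intro t ht
      have htS : t ∈ Icc A B := Ioo_subset_Icc_self ht
      have hfd : HasDerivAt f (g t) t :=
        ((hf.differentiableOn (by simp)) t
          htS).hasDerivWithinAt.hasDerivAt (Icc_mem_nhds ht.1 ht.2)
      have hpoly : HasDerivAt (fun s => ∑ k ∈ Finset.range (n + 2),
          iteratedDerivWithin k f (Icc A B) X * (s - X) ^ k / k.factorial)
          (∑ k ∈ Finset.range (n + 1),
            iteratedDerivWithin k g (Icc A B) X * (t - X) ^ k / k.factorial) t := by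
        have H : HasDerivAt (fun s => ∑ k ∈ Finset.range (n + 2),
            iteratedDerivWithin k f (Icc A B) X * (s - X) ^ k / k.factorial)
            (∑ k ∈ Finset.range (n + 2),
              iteratedDerivWithin k f (Icc A B) X * (k * (t - X) ^ (k - 1)) / k.factorial) t := by
          apply HasDerivAt.fun_sum
          intro k _
          have h1 : HasDerivAt (fun s : ℝ => (s - X) ^ k) (k * (t - X) ^ (k - 1)) t := by
            simpa using ((hasDerivAt_id t).sub_const X).fun_pow k
          simpa [mul_div_assoc] using
            (h1.const_mul (iteratedDerivWithin k f (Icc A B) X)).div_const (k.factorial : ℝ)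
        convert H using 1
        conv_rhs => rw [Finset.sum_range_succ']
        simp only [Nat.cast_zero, zero_mul, mul_zero, zero_div, add_zero]
        apply Finset.sum_congr rfl
        intro k _
        rw [hgf k X hX, Nat.factorial_succ]
        have hkf : (k.factorial : ℝ) ≠ 0 := Nat.cast_ne_zero.mpr k.factorial_pos.ne'
        push_cast
        field_simp
      exact hfd.sub hpoly
    rcases le_total X Y with hXY | hYX
    · have hsub : Icc X Y ⊆ Icc A B := Icc_subset_Icc hX.1 hY.2
      have hIoosub : Ioo X Y ⊆ Ioo A B := Ioo_subset_Ioo hX.1 hY.2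
      have hint : IntervalIntegrable φ volume X Y :=
        (hφcont.mono (by rw [uIcc_of_le hXY]; exact hsub)).intervalIntegrable
      have hFTC : ∫ t in X..Y, φ t = R Y - R X :=
        integral_eq_sub_of_hasDeriv_right_of_le hXY (hRcont.mono hsub)
          (fun t ht => (hderiv t (hIoosub ht)).hasDerivWithinAt) hint
      have hcrhs : Continuous (fun t : ℝ => C * (t - X) ^ (n + 1) / ((n + 1).factorial : ℝ)) := by
        fun_prop
      have hintrhs : IntervalIntegrable
          (fun t => C * (t - X) ^ (n + 1) / ((n + 1).factorial : ℝ)) volume X Y :=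
        hcrhs.intervalIntegrable X Y
      have hval : ∫ t in X..Y, C * (t - X) ^ (n + 1) / (n + 1).factorial
          = C * (Y - X) ^ (n + 2) / (n + 2).factorial := by
        have : (fun t => C * (t - X) ^ (n + 1) / ((n + 1).factorial : ℝ))
            = fun t => (C / (n + 1).factorial) * ((fun s => s ^ (n + 1)) (t - X)) := by
          funext t; ring
        rw [this, intervalIntegral.integral_const_mul, integral_comp_sub_right (fun s => s ^ (n + 1)) X]
        rw [sub_self, integral_pow]
        have h2 : ((n + 2).factorial : ℝ) = (n + 2) * (n + 1).factorial := by
          rw [Nat.factorial_succ]; push_cast; ring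
        have hf1 : ((n + 1).factorial : ℝ) ≠ 0 := Nat.cast_ne_zero.mpr (Nat.factorial_pos _).ne'
        have hf2 : ((n : ℝ) + 2) ≠ 0 := by positivity
        rw [zero_pow (by omega : n + 1 + 1 ≠ 0), sub_zero, h2]
        push_cast
        have hf3 : (n : ℝ) + 1 + 1 ≠ 0 := by positivity
        field_simp
        try ring
        try ring_nf
        try exact Or.inl trivial
      rw [hgoal]
      calc |R Y| = |∫ t in X..Y, φ t| := by rw [hFTC, hRX, sub_zero]
        _ ≤ ∫ t in X..Y, |φ t| := by
            simpa [Real.norm_eq_abs] using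
              intervalIntegral.norm_integral_le_integral_norm (f := φ) (μ := volume) hXY
        _ ≤ ∫ t in X..Y, C * (t - X) ^ (n + 1) / (n + 1).factorial := by
            apply integral_mono_on hXY hint.abs hintrhs
            intro t ht
            have h1 := IH t (hsub ht)
            rw [show |t - X| = t - X from abs_of_nonneg (sub_nonneg.2 ht.1)] at h1
            exact h1
        _ = C * |Y - X| ^ (n + 1 + 1) / (n + 1 + 1).factorial := by
            rw [hval, abs_of_nonneg (sub_nonneg.2 hXY)]
    · have hsub : Icc Y X ⊆ Icc A B := Icc_subset_Icc hY.1 hX.2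
      have hIoosub : Ioo Y X ⊆ Ioo A B := Ioo_subset_Ioo hY.1 hX.2
      have hint : IntervalIntegrable φ volume Y X :=
        (hφcont.mono (by rw [uIcc_of_le hYX]; exact hsub)).intervalIntegrable
      have hFTC : ∫ t in Y..X, φ t = R X - R Y :=
        integral_eq_sub_of_hasDeriv_right_of_le hYX (hRcont.mono hsub)
          (fun t ht => (hderiv t (hIoosub ht)).hasDerivWithinAt) hint
      have hcrhs : Continuous (fun t : ℝ => C * (X - t) ^ (n + 1) / ((n + 1).factorial : ℝ)) := by
        fun_prop
      have hintrhs : IntervalIntegrable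
          (fun t => C * (X - t) ^ (n + 1) / ((n + 1).factorial : ℝ)) volume Y X :=
        hcrhs.intervalIntegrable Y X
      have hval : ∫ t in Y..X, C * (X - t) ^ (n + 1) / (n + 1).factorial
          = C * (X - Y) ^ (n + 2) / (n + 2).factorial := by
        have : (fun t => C * (X - t) ^ (n + 1) / ((n + 1).factorial : ℝ))
            = fun t => (C / (n + 1).factorial) * ((fun s => s ^ (n + 1)) (X - t)) := by
          funext t; ring
        rw [this, intervalIntegral.integral_const_mul, integral_comp_sub_left (fun s => s ^ (n + 1)) X]
        rw [sub_self, integral_pow]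
        have h2 : ((n + 2).factorial : ℝ) = (n + 2) * (n + 1).factorial := by
          rw [Nat.factorial_succ]; push_cast; ring
        have hf1 : ((n + 1).factorial : ℝ) ≠ 0 := Nat.cast_ne_zero.mpr (Nat.factorial_pos _).ne'
        have hf2 : ((n : ℝ) + 2) ≠ 0 := by positivity
        rw [zero_pow (by omega : n + 1 + 1 ≠ 0), sub_zero, h2]
        push_cast
        have hf3 : (n : ℝ) + 1 + 1 ≠ 0 := by positivity
        field_simp
        try ring
        try ring_nf
        try exact Or.inl trivial
      rw [hgoal]
      calc |R Y| = |∫ t in Y..X, φ t| := by rw [hFTC, hRX, zero_sub, abs_neg]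
        _ ≤ ∫ t in Y..X, |φ t| := by
            simpa [Real.norm_eq_abs] using
              intervalIntegral.norm_integral_le_integral_norm (f := φ) (μ := volume) hYX
        _ ≤ ∫ t in Y..X, C * (X - t) ^ (n + 1) / (n + 1).factorial := by
            apply integral_mono_on hYX hint.abs hintrhs
            intro t ht
            have h1 := IH t (hsub ht)
            rw [show |t - X| = X - t from by
              rw [abs_sub_comm]; exact abs_of_nonneg (sub_nonneg.2 ht.2)] at h1
            exact h1
        _ = C * |Y - X| ^ (n + 1 + 1) / (n + 1 + 1).factorial := by
            rw [hval, abs_sub_comm, abs_of_nonneg (sub_nonneg.2 hYX)]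

lemma iDW_eq_iD {n : ℕ} {f : ℝ → ℝ} {s : Set ℝ} {y : ℝ} (h : s ∈ nhds y) :
    iteratedDerivWithin n f s y = iteratedDeriv n f y := by
  have h2 : iteratedFDerivWithin ℝ n f s y = iteratedFDeriv ℝ n f y := by
    rw [← iteratedFDerivWithin_univ, ← Set.univ_inter s, iteratedFDerivWithin_inter h]
  simp [iteratedDerivWithin, iteratedDeriv, h2]

lemma abs_sub_le'' (a b : ℝ) : |a - b| ≤ |a| + |b| := by
  calc |a - b| = |a + (-b)| := by ring_nf
    _ ≤ |a| + |(-b)| := abs_add_le a (-b)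
    _ = |a| + |b| := by rw [abs_neg]

lemma abs_add4 (A B C D : ℝ) : |A + B + C + D| ≤ |A| + |B| + |C| + |D| := by
  calc |A + B + C + D| ≤ |A + B + C| + |D| := abs_add_le _ _
    _ ≤ (|A + B| + |C|) + |D| := add_le_add_left (abs_add_le _ _) _
    _ ≤ ((|A| + |B|) + |C|) + |D| := by have := abs_add_le A B; linarith

set_option maxHeartbeats 2000000 in
/-- consistency error of the central difference scheme on the non-uniform
grid generated by a mapping x. If u solves u'' = λ²u on ℝ and x : [0,1] → ℝ is C⁴ with
x' > 0, then the consistency error ψ_h(q) satisfies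
|ψ_h(q) + (h²/3)·(x''(q)·u'''(x(q)) + (1/4)·(x'(q))²·u''''(x(q)))| ≤ C·h⁴ uniformly for
h ∈ (0,1/2], q ∈ [h, 1−h]; in particular |ψ_h(q)| ≤ C'·h² (second-order consistency). -/
theorem stmt_13 (lam : ℝ) (hlam : 0 < lam)
    (u : ℝ → ℝ) (hu : ContDiff ℝ 2 u)
    (hode : ∀ y : ℝ, deriv (deriv u) y = lam ^ 2 * u y)
    (x : ℝ → ℝ) (hx : ContDiffOn ℝ 4 x (Set.Icc 0 1))
    (hx' : ∀ q ∈ Set.Icc (0 : ℝ) 1, 0 < derivWithin x (Set.Icc 0 1) q)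
    (ψ : ℝ → ℝ → ℝ)
    (hψ : ψ = fun h q =>
      -(((u (x (q + h)) - u (x q)) / (x (q + h) - x q)
            - (u (x q) - u (x (q - h))) / (x q - x (q - h)))
          / (((x (q + h) - x q) + (x q - x (q - h))) / 2))
        + lam ^ 2 * u (x q)) :
    (∃ C > 0, ∀ h ∈ Set.Ioc (0 : ℝ) (1 / 2), ∀ q ∈ Set.Icc h (1 - h),
      |ψ h q
          + h ^ 2 / 3 * (iteratedDerivWithin 2 x (Set.Icc 0 1) q * iteratedDeriv 3 u (x q)
              + 1 / 4 * (derivWithin x (Set.Icc 0 1) q) ^ 2 * iteratedDeriv 4 u (x q))|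
        ≤ C * h ^ 4) ∧
    ∃ C' > 0, ∀ h ∈ Set.Ioc (0 : ℝ) (1 / 2), ∀ q ∈ Set.Icc h (1 - h),
      |ψ h q| ≤ C' * h ^ 2 := by
  -- smoothness of u
  have hdu1 : ContDiff ℝ 1 (deriv u) := by
    have h2 : ContDiff ℝ (1 + 1) u := by
      rw [show ((1 : WithTop ℕ∞) + 1) = 2 by norm_num]
      exact hu
    exact (contDiff_succ_iff_deriv.mp h2).2.2
  have husmooth : ∀ n : ℕ, ContDiff ℝ (n : ℕ) u ∧ ContDiff ℝ (n : ℕ) (deriv u) := by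
    intro n
    induction n with
    | zero => exact ⟨hu.of_le (by simp), hdu1.of_le (by simp)⟩
    | succ k ih =>
      have hd : ContDiff ℝ (k : ℕ) (deriv (deriv u)) := by
        have he : (deriv (deriv u)) = fun y => lam ^ 2 * u y := funext hode
        rw [he]; exact contDiff_const.mul ih.1
      have h1 : ContDiff ℝ ((k : ℕ) + 1) (deriv u) :=
        contDiff_succ_iff_deriv.mpr ⟨hdu1.differentiable (by norm_num),
          fun hω => absurd hω (by simp), hd⟩
      have h0 : ContDiff ℝ ((k : ℕ) + 1) u :=
        contDiff_succ_iff_deriv.mpr ⟨hu.differentiable (by norm_num),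
          fun hω => absurd hω (by simp), ih.2⟩
      exact ⟨by exact_mod_cast h0, by exact_mod_cast h1⟩
  have hS : UniqueDiffOn ℝ (Set.Icc (0:ℝ) 1) := uniqueDiffOn_Icc one_pos
  have h0S : (0:ℝ) ∈ Set.Icc (0:ℝ) 1 := ⟨le_refl 0, zero_le_one⟩
  obtain ⟨Mx, hMx⟩ := isCompact_Icc.exists_bound_of_continuousOn hx.continuousOn
  have hMx0 : 0 ≤ Mx := (norm_nonneg (x 0)).trans (hMx 0 h0S)
  have hJlt : -(Mx+1) < Mx+1 := by linarith
  have hSJ : UniqueDiffOn ℝ (Set.Icc (-(Mx+1)) (Mx+1)) := uniqueDiffOn_Icc hJlt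
  have hxJ : ∀ q ∈ Set.Icc (0:ℝ) 1, x q ∈ Set.Ioo (-(Mx+1)) (Mx+1) := by
    intro q hq
    have h1 := abs_le.mp (by simpa [Real.norm_eq_abs] using hMx q hq)
    exact ⟨by linarith [h1.1], by linarith [h1.2]⟩
  have hxJ' : ∀ q ∈ Set.Icc (0:ℝ) 1, x q ∈ Set.Icc (-(Mx+1)) (Mx+1) :=
    fun q hq => Ioo_subset_Icc_self (hxJ q hq)
  have hu6 : ContDiffOn ℝ ((5:ℕ) + 1 : ℕ) u (Set.Icc (-(Mx+1)) (Mx+1)) :=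
    ((husmooth 6).1).contDiffOn
  have hucont : ∀ k : ℕ, k ≤ 6 →
      ContinuousOn (iteratedDerivWithin k u (Set.Icc (-(Mx+1)) (Mx+1)))
        (Set.Icc (-(Mx+1)) (Mx+1)) := by
    intro k hk
    exact hu6.continuousOn_iteratedDerivWithin (by exact_mod_cast hk) hSJ
  obtain ⟨Mu3, hMu3⟩ := isCompact_Icc.exists_bound_of_continuousOn (hucont 3 (by norm_num))
  obtain ⟨Mu4, hMu4⟩ := isCompact_Icc.exists_bound_of_continuousOn (hucont 4 (by norm_num))
  obtain ⟨Mu5, hMu5⟩ := isCompact_Icc.exists_bound_of_continuousOn (hucont 5 (by norm_num))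
  obtain ⟨Mu6, hMu6⟩ := isCompact_Icc.exists_bound_of_continuousOn (hucont 6 (by norm_num))
  have h0J : (0:ℝ) ∈ Set.Icc (-(Mx+1)) (Mx+1) := ⟨by linarith, by linarith⟩
  have hMu30 : 0 ≤ Mu3 := (norm_nonneg _).trans (hMu3 0 h0J)
  have hMu40 : 0 ≤ Mu4 := (norm_nonneg _).trans (hMu4 0 h0J)
  have hMu50 : 0 ≤ Mu5 := (norm_nonneg _).trans (hMu5 0 h0J)
  have hMu60 : 0 ≤ Mu6 := (norm_nonneg _).trans (hMu6 0 h0J)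
  have hxdcont : ContinuousOn (derivWithin x (Set.Icc 0 1)) (Set.Icc (0:ℝ) 1) :=
    hx.continuousOn_derivWithin hS (by norm_num)
  obtain ⟨M1x, hM1x⟩ := isCompact_Icc.exists_bound_of_continuousOn hxdcont
  obtain ⟨M2x, hM2x⟩ := isCompact_Icc.exists_bound_of_continuousOn
    (hx.continuousOn_iteratedDerivWithin (by norm_num : ((2:ℕ):WithTop ℕ∞) ≤ 4) hS)
  obtain ⟨M3x, hM3x⟩ := isCompact_Icc.exists_bound_of_continuousOn
    (hx.continuousOn_iteratedDerivWithin (by norm_num : ((3:ℕ):WithTop ℕ∞) ≤ 4) hS)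
  obtain ⟨M4x, hM4x⟩ := isCompact_Icc.exists_bound_of_continuousOn
    (hx.continuousOn_iteratedDerivWithin (by norm_num : ((4:ℕ):WithTop ℕ∞) ≤ 4) hS)
  have hM1x0 : 0 ≤ M1x := (norm_nonneg _).trans (hM1x 0 h0S)
  have hM2x0 : 0 ≤ M2x := (norm_nonneg _).trans (hM2x 0 h0S)
  have hM3x0 : 0 ≤ M3x := (norm_nonneg _).trans (hM3x 0 h0S)
  have hM4x0 : 0 ≤ M4x := (norm_nonneg _).trans (hM4x 0 h0S)
  obtain ⟨q₀, hq₀S, hq₀min⟩ := isCompact_Icc.exists_isMinOn (Set.nonempty_Icc.mpr zero_le_one)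
    hxdcont
  set m : ℝ := derivWithin x (Set.Icc 0 1) q₀ with hmdef
  have hm : 0 < m := hx' q₀ hq₀S
  have hmle : ∀ q ∈ Set.Icc (0:ℝ) 1, m ≤ derivWithin x (Set.Icc 0 1) q := fun q hq => hq₀min hq
  have hxdiff : ∀ t ∈ Set.Ioo (0:ℝ) 1, HasDerivAt x (derivWithin x (Set.Icc 0 1) t) t := by
    intro t ht
    exact ((hx.differentiableOn (by norm_num) t
      (Ioo_subset_Icc_self ht)).hasDerivWithinAt).hasDerivAt (Icc_mem_nhds ht.1 ht.2)
  have hkey : ∀ p r, p ∈ Set.Icc (0:ℝ) 1 → r ∈ Set.Icc (0:ℝ) 1 → p ≤ r →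
      m * (r - p) ≤ x r - x p := by
    intro p r hp hr hpr
    have hmono : MonotoneOn (fun t => x t - m * t) (Set.Icc (0:ℝ) 1) := by
      apply monotoneOn_of_deriv_nonneg (convex_Icc 0 1)
      · exact hx.continuousOn.sub (by fun_prop)
      · intro t ht
        rw [interior_Icc] at ht
        have hmt : HasDerivAt (fun s : ℝ => m * s) m t := by
          simpa using (hasDerivAt_id t).const_mul m
        exact ((hxdiff t ht).sub hmt).differentiableAt.differentiableWithinAt
      · intro t ht
        rw [interior_Icc] at ht
        have hmt : HasDerivAt (fun s : ℝ => m * s) m t := by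
          simpa using (hasDerivAt_id t).const_mul m
        rw [show deriv (fun t => x t - m * t) t = _ from ((hxdiff t ht).sub hmt).deriv]
        have := hmle t (Ioo_subset_Icc_self ht)
        linarith
    have := hmono hp hr hpr
    simp only at this
    linarith [this]
  -- constants
  obtain ⟨c2, hc2def⟩ : ∃ v : ℝ, v = M2x + M4x/12 := ⟨_, rfl⟩
  obtain ⟨c1, hc1def⟩ : ∃ v : ℝ, v = M3x/3 + M4x/12 := ⟨_, rfl⟩
  obtain ⟨C4, hC4def⟩ : ∃ v : ℝ, v = (3*c2^2 + 4*c1*M1x)/4 := ⟨_, rfl⟩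
  obtain ⟨C5, hC5def⟩ : ∃ v : ℝ, v = 2*c2*M1x^2 := ⟨_, rfl⟩
  obtain ⟨Cρ, hCρdef⟩ : ∃ v : ℝ, v = Mu6*M1x^5/(360*m) := ⟨_, rfl⟩
  obtain ⟨CC, hCCdef⟩ : ∃ v : ℝ, v = Mu3*(M4x/12)/3 + Mu4*C4/12 + Mu5*C5/60 + Cρ + 1 :=
    ⟨_, rfl⟩
  obtain ⟨CC', hCC'def⟩ : ∃ v : ℝ, v = CC + (M2x*Mu3 + M1x^2*Mu4/4)/3 + 1 := ⟨_, rfl⟩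
  have hc20 : 0 ≤ c2 := by rw [hc2def]; linarith
  have hc10 : 0 ≤ c1 := by rw [hc1def]; linarith
  have hC40 : 0 ≤ C4 := by
    rw [hC4def]
    have h1 : 0 ≤ c2^2 := sq_nonneg c2
    have h2 : 0 ≤ c1*M1x := mul_nonneg hc10 hM1x0
    linarith
  have hC50 : 0 ≤ C5 := by
    rw [hC5def]
    have : 0 ≤ c2*M1x^2 := mul_nonneg hc20 (sq_nonneg M1x)
    linarith
  have hCρ0 : 0 ≤ Cρ := by
    rw [hCρdef]
    exact div_nonneg (mul_nonneg hMu60 (pow_nonneg hM1x0 5)) (by positivity)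
  have ht1 : 0 ≤ Mu3*(M4x/12)/3 := div_nonneg (mul_nonneg hMu30 (by linarith)) (by norm_num)
  have ht2 : 0 ≤ Mu4*C4/12 := div_nonneg (mul_nonneg hMu40 hC40) (by norm_num)
  have ht3 : 0 ≤ Mu5*C5/60 := div_nonneg (mul_nonneg hMu50 hC50) (by norm_num)
  have hCC0 : 0 < CC := by rw [hCCdef]; linarith
  have hD0 : 0 ≤ (M2x*Mu3 + M1x^2*Mu4/4)/3 := by
    have h1 : 0 ≤ M2x*Mu3 := mul_nonneg hM2x0 hMu30
    have h2 : 0 ≤ M1x^2*Mu4 := mul_nonneg (sq_nonneg M1x) hMu40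
    have h3 : 0 ≤ M2x*Mu3 + M1x^2*Mu4/4 := by linarith
    linarith
  have hCC'0 : 0 < CC' := by rw [hCC'def]; linarith
  have KEY : ∀ h ∈ Set.Ioc (0 : ℝ) (1 / 2), ∀ q ∈ Set.Icc h (1 - h),
      |ψ h q
          + h ^ 2 / 3 * (iteratedDerivWithin 2 x (Set.Icc 0 1) q * iteratedDeriv 3 u (x q)
              + 1 / 4 * (derivWithin x (Set.Icc 0 1) q) ^ 2 * iteratedDeriv 4 u (x q))|
        ≤ CC * h ^ 4 ∧ |ψ h q| ≤ CC' * h ^ 2 := by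
    intro h hh q hq
    obtain ⟨hh0, hh2⟩ := hh
    obtain ⟨hq1, hq2⟩ := hq
    have hh1 : h ≤ 1 := by linarith
    have hsq1 : h^2 ≤ 1 := pow_le_one₀ hh0.le hh1
    have hh42 : h^4 ≤ h^2 := pow_le_pow_of_le_one hh0.le hh1 (by norm_num)
    have hh43 : h^4 ≤ h^3 := pow_le_pow_of_le_one hh0.le hh1 (by norm_num)
    have hp4 : (0:ℝ) < h^4 := pow_pos hh0 4
    have hqS : q ∈ Set.Icc (0:ℝ) 1 := ⟨by linarith, by linarith⟩
    have hqpS : q + h ∈ Set.Icc (0:ℝ) 1 := ⟨by linarith, by linarith⟩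
    have hqmS : q - h ∈ Set.Icc (0:ℝ) 1 := ⟨by linarith, by linarith⟩
    obtain ⟨x1, hx1v⟩ : ∃ v, v = derivWithin x (Set.Icc 0 1) q := ⟨_, rfl⟩
    obtain ⟨x2, hx2v⟩ : ∃ v, v = iteratedDerivWithin 2 x (Set.Icc 0 1) q := ⟨_, rfl⟩
    obtain ⟨x3, hx3v⟩ : ∃ v, v = iteratedDerivWithin 3 x (Set.Icc 0 1) q := ⟨_, rfl⟩
    obtain ⟨u1, hu1v⟩ : ∃ v, v = iteratedDeriv 1 u (x q) := ⟨_, rfl⟩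
    obtain ⟨u2, hu2v⟩ : ∃ v, v = iteratedDeriv 2 u (x q) := ⟨_, rfl⟩
    obtain ⟨u3, hu3v⟩ : ∃ v, v = iteratedDeriv 3 u (x q) := ⟨_, rfl⟩
    obtain ⟨u4, hu4v⟩ : ∃ v, v = iteratedDeriv 4 u (x q) := ⟨_, rfl⟩
    obtain ⟨u5, hu5v⟩ : ∃ v, v = iteratedDeriv 5 u (x q) := ⟨_, rfl⟩
    obtain ⟨a, hav⟩ : ∃ v, v = x (q + h) - x q := ⟨_, rfl⟩
    obtain ⟨b, hbv⟩ : ∃ v, v = x q - x (q - h) := ⟨_, rfl⟩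
    have hx1m : m ≤ x1 := by rw [hx1v]; exact hmle q hqS
    have hx1pos : 0 < x1 := lt_of_lt_of_le hm hx1m
    have hx1M : x1 ≤ M1x := by
      rw [hx1v]; exact le_trans (le_abs_self _) (hM1x q hqS)
    have hx2M : |x2| ≤ M2x := by rw [hx2v]; exact hM2x q hqS
    have hx3M : |x3| ≤ M3x := by rw [hx3v]; exact hM3x q hqS
    have ha_low : m * h ≤ a := by
      have h1 := hkey q (q+h) hqS hqpS (by linarith)
      have e : q + h - q = h := by ring
      rw [e] at h1; rw [hav]; linarith
    have hb_low : m * h ≤ b := by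
      have h1 := hkey (q-h) q hqmS hqS (by linarith)
      have e : q - (q - h) = h := by ring
      rw [e] at h1; rw [hbv]; linarith
    have ha0 : 0 < a := lt_of_lt_of_le (by positivity) ha_low
    have hb0 : 0 < b := lt_of_lt_of_le (by positivity) hb_low
    have hab0 : 0 < a + b := by linarith
    have ha_up : a ≤ M1x * h := by
      have h1 := Convex.norm_image_sub_le_of_norm_derivWithin_le (𝕜 := ℝ)
        (hx.differentiableOn (by norm_num)) (fun t ht => hM1x t ht)
        (convex_Icc 0 1) hqS hqpS
      rw [Real.norm_eq_abs, Real.norm_eq_abs] at h1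
      rw [show q + h - q = h from by ring, abs_of_pos hh0] at h1
      rw [hav]
      calc x (q+h) - x q ≤ |x (q+h) - x q| := le_abs_self _
        _ ≤ M1x * h := h1
    have hb_up : b ≤ M1x * h := by
      have h1 := Convex.norm_image_sub_le_of_norm_derivWithin_le (𝕜 := ℝ)
        (hx.differentiableOn (by norm_num)) (fun t ht => hM1x t ht)
        (convex_Icc 0 1) hqmS hqS
      rw [Real.norm_eq_abs, Real.norm_eq_abs] at h1
      rw [show q - (q - h) = h from by ring, abs_of_pos hh0] at h1
      rw [hbv]
      calc x q - x (q-h) ≤ |x q - x (q-h)| := le_abs_self _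
        _ ≤ M1x * h := h1
    -- Taylor for x
    have hsumx : ∀ d : ℝ, (∑ k ∈ Finset.range (3+1),
        iteratedDerivWithin k x (Set.Icc 0 1) q * d^k / k.factorial)
        = x q + x1*d + x2*d^2/2 + x3*d^3/6 := by
      intro d
      rw [Finset.sum_range_succ, Finset.sum_range_succ, Finset.sum_range_succ,
        Finset.sum_range_one]
      rw [show iteratedDerivWithin 0 x (Set.Icc 0 1) q = x q from by
        simp [iteratedDerivWithin_zero]]
      rw [iteratedDerivWithin_one, ← hx1v, ← hx2v, ← hx3v]
      norm_num [Nat.factorial]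
      try ring
    have hTa : |a - (h*x1 + h^2*x2/2 + h^3*x3/6)| ≤ M4x/24*h^4 := by
      have h1 := taylor_bound_within 0 1 one_pos 3 x (by exact_mod_cast hx) M4x q (q+h)
        hqS hqpS (fun t ht => hM4x t ht)
      rw [hsumx (q + h - q), show q + h - q = h from by ring, abs_of_pos hh0] at h1
      have e : a - (h*x1 + h^2*x2/2 + h^3*x3/6)
          = x (q+h) - (x q + x1*h + x2*h^2/2 + x3*h^3/6) := by rw [hav]; ring
      rw [e]
      calc |x (q+h) - (x q + x1*h + x2*h^2/2 + x3*h^3/6)|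
          ≤ M4x * h^(3+1) / (3+1).factorial := h1
        _ = M4x/24*h^4 := by norm_num [Nat.factorial]; ring
    have hTb : |b - (h*x1 - h^2*x2/2 + h^3*x3/6)| ≤ M4x/24*h^4 := by
      have h1 := taylor_bound_within 0 1 one_pos 3 x (by exact_mod_cast hx) M4x q (q-h)
        hqS hqmS (fun t ht => hM4x t ht)
      rw [hsumx (q - h - q), show q - h - q = -h from by ring, abs_neg, abs_of_pos hh0] at h1
      have e : b - (h*x1 - h^2*x2/2 + h^3*x3/6)
          = -(x (q-h) - (x q + x1*(-h) + x2*(-h)^2/2 + x3*(-h)^3/6)) := by rw [hbv]; ring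
      rw [e, abs_neg]
      calc |x (q-h) - (x q + x1*(-h) + x2*(-h)^2/2 + x3*(-h)^3/6)|
          ≤ M4x * h^(3+1) / (3+1).factorial := h1
        _ = M4x/24*h^4 := by norm_num [Nat.factorial]; ring
    -- Taylor for u
    have hXJ : x q ∈ Set.Icc (-(Mx+1)) (Mx+1) := hxJ' q hqS
    have hXpJ : x (q+h) ∈ Set.Icc (-(Mx+1)) (Mx+1) := hxJ' (q+h) hqpS
    have hXmJ : x (q-h) ∈ Set.Icc (-(Mx+1)) (Mx+1) := hxJ' (q-h) hqmS
    have hJnhds : Set.Icc (-(Mx+1)) (Mx+1) ∈ nhds (x q) :=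
      Icc_mem_nhds (hxJ q hqS).1 (hxJ q hqS).2
    have hconv : ∀ k : ℕ, iteratedDerivWithin k u (Set.Icc (-(Mx+1)) (Mx+1)) (x q)
        = iteratedDeriv k u (x q) := fun k => iDW_eq_iD hJnhds
    have hu3M : |u3| ≤ Mu3 := by rw [hu3v, ← hconv 3]; exact hMu3 (x q) hXJ
    have hu4M : |u4| ≤ Mu4 := by rw [hu4v, ← hconv 4]; exact hMu4 (x q) hXJ
    have hu5M : |u5| ≤ Mu5 := by rw [hu5v, ← hconv 5]; exact hMu5 (x q) hXJ
    have hsumu : ∀ d : ℝ, (∑ k ∈ Finset.range (5+1),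
        iteratedDerivWithin k u (Set.Icc (-(Mx+1)) (Mx+1)) (x q) * d^k / k.factorial)
        = u (x q) + u1*d + u2*d^2/2 + u3*d^3/6 + u4*d^4/24 + u5*d^5/120 := by
      intro d
      rw [Finset.sum_range_succ, Finset.sum_range_succ, Finset.sum_range_succ,
        Finset.sum_range_succ, Finset.sum_range_succ, Finset.sum_range_one]
      rw [hconv 0, hconv 1, hconv 2, hconv 3, hconv 4, hconv 5]
      rw [show iteratedDeriv 0 u (x q) = u (x q) from by simp [iteratedDeriv_zero]]
      rw [← hu1v, ← hu2v, ← hu3v, ← hu4v, ← hu5v]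
      norm_num [Nat.factorial]
      try ring
    obtain ⟨Ra, hRav⟩ : ∃ v, v = u (x (q+h))
        - (u (x q) + u1*a + u2*a^2/2 + u3*a^3/6 + u4*a^4/24 + u5*a^5/120) := ⟨_, rfl⟩
    obtain ⟨Rb, hRbv⟩ : ∃ v, v = u (x (q-h))
        - (u (x q) + u1*(-b) + u2*(-b)^2/2 + u3*(-b)^3/6 + u4*(-b)^4/24 + u5*(-b)^5/120) :=
      ⟨_, rfl⟩
    have hRaM : |Ra| ≤ Mu6*a^6/720 := by
      have h1 := taylor_bound_within (-(Mx+1)) (Mx+1) hJlt 5 u hu6 Mu6 (x q) (x (q+h))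
        hXJ hXpJ (fun t ht => hMu6 t ht)
      rw [hsumu (x (q+h) - x q), ← hav, abs_of_pos ha0] at h1
      calc |Ra| = |u (x (q+h)) - (u (x q) + u1*a + u2*a^2/2 + u3*a^3/6 + u4*a^4/24
            + u5*a^5/120)| := by rw [hRav]
        _ ≤ Mu6 * a^(5+1) / (5+1).factorial := h1
        _ = Mu6*a^6/720 := by norm_num [Nat.factorial]
    have hRbM : |Rb| ≤ Mu6*b^6/720 := by
      have h1 := taylor_bound_within (-(Mx+1)) (Mx+1) hJlt 5 u hu6 Mu6 (x q) (x (q-h))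
        hXJ hXmJ (fun t ht => hMu6 t ht)
      rw [hsumu (x (q-h) - x q), show x (q-h) - x q = -b from by rw [hbv]; ring,
        abs_neg, abs_of_pos hb0] at h1
      calc |Rb| = |u (x (q-h)) - (u (x q) + u1*(-b) + u2*(-b)^2/2 + u3*(-b)^3/6
            + u4*(-b)^4/24 + u5*(-b)^5/120)| := by rw [hRbv]
        _ ≤ Mu6 * b^(5+1) / (5+1).factorial := h1
        _ = Mu6*b^6/720 := by norm_num [Nat.factorial]
    have hode2 : lam^2 * u (x q) = u2 := by
      rw [hu2v, show (2:ℕ) = 1 + 1 from rfl, iteratedDeriv_succ, iteratedDeriv_one]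
      exact (hode (x q)).symm
    -- the central identity
    have hT : ψ h q + h ^ 2 / 3 * (x2 * u3 + 1 / 4 * x1 ^ 2 * u4)
        = -(u3*(a - b - h^2*x2)/3 + u4*(a^2 - a*b + b^2 - h^2*x1^2)/12
            + u5*((a-b)*(a^2+b^2))/60 + (Ra/a + Rb/b)*(2/(a+b))) := by
      have hup : u (x (q+h)) = u (x q) + u1*a + u2*a^2/2 + u3*a^3/6 + u4*a^4/24
          + u5*a^5/120 + Ra := by rw [hRav]; ring
      have hum : u (x (q-h)) = u (x q) - u1*b + u2*b^2/2 - u3*b^3/6 + u4*b^4/24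
          - u5*b^5/120 + Rb := by rw [hRbv]; ring
      simp only [hψ]
      rw [← hav, ← hbv, hup, hum, hode2]
      have hane : a ≠ 0 := ne_of_gt ha0
      have hbne : b ≠ 0 := ne_of_gt hb0
      have habne : a + b ≠ 0 := ne_of_gt hab0
      field_simp
      ring
    -- component bounds
    have hE3 : |a - b - h^2*x2| ≤ M4x/12*h^4 := by
      have e : a - b - h^2*x2 = (a - (h*x1 + h^2*x2/2 + h^3*x3/6))
          - (b - (h*x1 - h^2*x2/2 + h^3*x3/6)) := by ring
      rw [e]
      calc |_ - _| ≤ |a - (h*x1 + h^2*x2/2 + h^3*x3/6)|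
          + |b - (h*x1 - h^2*x2/2 + h^3*x3/6)| := abs_sub_le'' _ _
        _ ≤ M4x/24*h^4 + M4x/24*h^4 := add_le_add hTa hTb
        _ = M4x/12*h^4 := by ring
    have hab : |a - b| ≤ c2*h^2 := by
      have e : a - b = h^2*x2 + ((a - (h*x1 + h^2*x2/2 + h^3*x3/6))
          - (b - (h*x1 - h^2*x2/2 + h^3*x3/6))) := by ring
      rw [e]
      have h1 : |h^2*x2| ≤ h^2*M2x := by
        rw [abs_mul, abs_of_nonneg (by positivity : (0:ℝ) ≤ h^2)]
        exact mul_le_mul_of_nonneg_left hx2M (by positivity)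
      have h2 : |(a - (h*x1 + h^2*x2/2 + h^3*x3/6)) - (b - (h*x1 - h^2*x2/2 + h^3*x3/6))|
          ≤ M4x/12*h^4 := by
        calc |_ - _| ≤ _ + _ := abs_sub_le'' _ _
          _ ≤ M4x/24*h^4 + M4x/24*h^4 := add_le_add hTa hTb
          _ = M4x/12*h^4 := by ring
      calc |h^2*x2 + _| ≤ |h^2*x2| + _ := abs_add_le _ _
        _ ≤ h^2*M2x + M4x/12*h^4 := add_le_add h1 h2
        _ ≤ h^2*M2x + M4x/12*h^2 := by
            have := mul_le_mul_of_nonneg_left hh42 (show (0:ℝ) ≤ M4x/12 by linarith)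
            linarith
        _ = c2*h^2 := by rw [hc2def]; ring
    have habsum : |a + b - 2*h*x1| ≤ c1*h^3 := by
      have e : a + b - 2*h*x1 = h^3*x3/3 + ((a - (h*x1 + h^2*x2/2 + h^3*x3/6))
          + (b - (h*x1 - h^2*x2/2 + h^3*x3/6))) := by ring
      rw [e]
      have h1 : |h^3*x3/3| ≤ M3x/3*h^3 := by
        rw [abs_div, abs_mul, abs_of_nonneg (by positivity : (0:ℝ) ≤ h^3),
          show |(3:ℝ)| = 3 from by norm_num]
        rw [div_le_iff₀ (by norm_num : (0:ℝ) < 3)]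
        have := mul_le_mul_of_nonneg_left hx3M (by positivity : (0:ℝ) ≤ h^3)
        linarith
      have h2 : |(a - (h*x1 + h^2*x2/2 + h^3*x3/6)) + (b - (h*x1 - h^2*x2/2 + h^3*x3/6))|
          ≤ M4x/12*h^4 := by
        calc |_ + _| ≤ _ + _ := abs_add_le _ _
          _ ≤ M4x/24*h^4 + M4x/24*h^4 := add_le_add hTa hTb
          _ = M4x/12*h^4 := by ring
      calc |h^3*x3/3 + _| ≤ |h^3*x3/3| + _ := abs_add_le _ _
        _ ≤ M3x/3*h^3 + M4x/12*h^4 := add_le_add h1 h2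
        _ ≤ M3x/3*h^3 + M4x/12*h^3 := by
            have := mul_le_mul_of_nonneg_left hh43 (show (0:ℝ) ≤ M4x/12 by linarith)
            linarith
        _ = c1*h^3 := by rw [hc1def]; ring
    have habsum2 : a + b + 2*h*x1 ≤ 4*M1x*h := by
      have e1 : (2*h)*x1 ≤ (2*h)*M1x := mul_le_mul_of_nonneg_left hx1M (by positivity)
      linarith [ha_up, hb_up]
    have habsum2' : (0:ℝ) ≤ a + b + 2*h*x1 := by positivity
    have hE4 : |a^2 - a*b + b^2 - h^2*x1^2| ≤ C4*h^4 := by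
      have hid : a^2 - a*b + b^2 - h^2*x1^2
          = (3*(a-b)^2 + (a+b-2*h*x1)*(a+b+2*h*x1))/4 := by ring
      rw [hid]
      have h1 : (a-b)^2 ≤ (c2*h^2)^2 := by
        have := pow_le_pow_left₀ (abs_nonneg (a-b)) hab 2
        rwa [sq_abs] at this
      have h2 : |(a+b-2*h*x1)*(a+b+2*h*x1)| ≤ (c1*h^3)*(4*M1x*h) := by
        rw [abs_mul, abs_of_nonneg habsum2']
        exact mul_le_mul habsum habsum2 habsum2' (by positivity)
      have h3 : |3*(a-b)^2 + (a+b-2*h*x1)*(a+b+2*h*x1)|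
          ≤ 3*(c2*h^2)^2 + (c1*h^3)*(4*M1x*h) := by
        calc |_ + _| ≤ |3*(a-b)^2| + |(a+b-2*h*x1)*(a+b+2*h*x1)| := abs_add_le _ _
          _ ≤ 3*(c2*h^2)^2 + (c1*h^3)*(4*M1x*h) := by
              rw [abs_of_nonneg (by positivity : (0:ℝ) ≤ 3*(a-b)^2)]
              linarith [h1, h2]
      calc |(3*(a-b)^2 + (a+b-2*h*x1)*(a+b+2*h*x1))/4|
          = |3*(a-b)^2 + (a+b-2*h*x1)*(a+b+2*h*x1)|/4 := by
            rw [abs_div, show |(4:ℝ)| = 4 from by norm_num]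
        _ ≤ (3*(c2*h^2)^2 + (c1*h^3)*(4*M1x*h))/4 := by linarith
        _ = C4*h^4 := by rw [hC4def]; ring
    have hE5 : |(a-b)*(a^2+b^2)| ≤ C5*h^4 := by
      rw [abs_mul]
      have h1 : |a^2+b^2| ≤ 2*(M1x*h)^2 := by
        rw [abs_of_nonneg (by positivity)]
        have e1 : a^2 ≤ (M1x*h)^2 := pow_le_pow_left₀ ha0.le ha_up 2
        have e2 : b^2 ≤ (M1x*h)^2 := pow_le_pow_left₀ hb0.le hb_up 2
        linarith
      calc |a - b| * |a^2+b^2| ≤ (c2*h^2)*(2*(M1x*h)^2) :=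
          mul_le_mul hab h1 (abs_nonneg _) (by positivity)
        _ = C5*h^4 := by rw [hC5def]; ring
    have hRadiv : |Ra|/a ≤ Mu6*(M1x*h)^5/720 := by
      rw [div_le_iff₀ ha0]
      have h5 : a^5 ≤ (M1x*h)^5 := pow_le_pow_left₀ ha0.le ha_up 5
      calc |Ra| ≤ Mu6*a^6/720 := hRaM
        _ = (Mu6*a^5/720)*a := by ring
        _ ≤ (Mu6*(M1x*h)^5/720)*a := by
            apply mul_le_mul_of_nonneg_right _ ha0.le
            have : Mu6*a^5 ≤ Mu6*(M1x*h)^5 := mul_le_mul_of_nonneg_left h5 hMu60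
            linarith
    have hRbdiv : |Rb|/b ≤ Mu6*(M1x*h)^5/720 := by
      rw [div_le_iff₀ hb0]
      have h5 : b^5 ≤ (M1x*h)^5 := pow_le_pow_left₀ hb0.le hb_up 5
      calc |Rb| ≤ Mu6*b^6/720 := hRbM
        _ = (Mu6*b^5/720)*b := by ring
        _ ≤ (Mu6*(M1x*h)^5/720)*b := by
            apply mul_le_mul_of_nonneg_right _ hb0.le
            have : Mu6*b^5 ≤ Mu6*(M1x*h)^5 := mul_le_mul_of_nonneg_left h5 hMu60
            linarith
    have hρ : |Ra/a + Rb/b| * (2/(a+b)) ≤ Cρ*h^4 := by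
      have h1 : |Ra/a + Rb/b| ≤ Mu6*(M1x*h)^5/360 := by
        calc |Ra/a + Rb/b| ≤ |Ra/a| + |Rb/b| := abs_add_le _ _
          _ = |Ra|/a + |Rb|/b := by
              rw [abs_div, abs_div, abs_of_pos ha0, abs_of_pos hb0]
          _ ≤ Mu6*(M1x*h)^5/720 + Mu6*(M1x*h)^5/720 := add_le_add hRadiv hRbdiv
          _ = Mu6*(M1x*h)^5/360 := by ring
      have h2 : 2/(a+b) ≤ 1/(m*h) := by
        rw [div_le_div_iff₀ hab0 (by positivity)]
        ring_nf
        linarith [ha_low, hb_low]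
      have hM5nn : (0:ℝ) ≤ Mu6*(M1x*h)^5/360 :=
        div_nonneg (mul_nonneg hMu60 (by positivity)) (by norm_num)
      calc |Ra/a + Rb/b| * (2/(a+b)) ≤ (Mu6*(M1x*h)^5/360) * (1/(m*h)) :=
          mul_le_mul h1 h2 (by positivity) hM5nn
        _ = Cρ*h^4 := by
            rw [hCρdef]
            field_simp
    -- main estimate
    have MAIN : |ψ h q + h ^ 2 / 3 * (x2 * u3 + 1 / 4 * x1 ^ 2 * u4)| ≤ CC*h^4 := by
      rw [hT, abs_neg]
      have T1 : |u3*(a - b - h^2*x2)/3| ≤ Mu3*(M4x/12*h^4)/3 := by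
        rw [abs_div, abs_mul, show |(3:ℝ)| = 3 from by norm_num]
        have := mul_le_mul hu3M hE3 (abs_nonneg _) hMu30
        linarith
      have T2 : |u4*(a^2 - a*b + b^2 - h^2*x1^2)/12| ≤ Mu4*(C4*h^4)/12 := by
        rw [abs_div, abs_mul, show |(12:ℝ)| = 12 from by norm_num]
        have := mul_le_mul hu4M hE4 (abs_nonneg _) hMu40
        linarith
      have T3 : |u5*((a-b)*(a^2+b^2))/60| ≤ Mu5*(C5*h^4)/60 := by
        rw [abs_div, abs_mul, show |(60:ℝ)| = 60 from by norm_num]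
        have := mul_le_mul hu5M hE5 (abs_nonneg _) hMu50
        linarith
      have T4 : |(Ra/a + Rb/b)*(2/(a+b))| ≤ Cρ*h^4 := by
        rw [abs_mul, abs_of_pos (show (0:ℝ) < 2/(a+b) by positivity)]
        exact hρ
      calc |u3*(a - b - h^2*x2)/3 + u4*(a^2 - a*b + b^2 - h^2*x1^2)/12
          + u5*((a-b)*(a^2+b^2))/60 + (Ra/a + Rb/b)*(2/(a+b))|
          ≤ |u3*(a - b - h^2*x2)/3| + |u4*(a^2 - a*b + b^2 - h^2*x1^2)/12|
            + |u5*((a-b)*(a^2+b^2))/60| + |(Ra/a + Rb/b)*(2/(a+b))| := abs_add4 _ _ _ _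
        _ ≤ Mu3*(M4x/12*h^4)/3 + Mu4*(C4*h^4)/12 + Mu5*(C5*h^4)/60 + Cρ*h^4 := by
            linarith [T1, T2, T3, T4]
        _ ≤ CC*h^4 := by
            have e : Mu3*(M4x/12*h^4)/3 + Mu4*(C4*h^4)/12 + Mu5*(C5*h^4)/60 + Cρ*h^4
                = (CC - 1)*h^4 := by rw [hCCdef]; ring
            rw [e]
            linarith [hp4]
    constructor
    · rw [show iteratedDerivWithin 2 x (Set.Icc 0 1) q = x2 from hx2v.symm,
        show iteratedDeriv 3 u (x q) = u3 from hu3v.symm,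
        show derivWithin x (Set.Icc 0 1) q = x1 from hx1v.symm,
        show iteratedDeriv 4 u (x q) = u4 from hu4v.symm]
      exact MAIN
    · have hZ : |h ^ 2 / 3 * (x2 * u3 + 1 / 4 * x1 ^ 2 * u4)|
          ≤ (M2x*Mu3 + M1x^2*Mu4/4)/3*h^2 := by
        rw [abs_mul, abs_of_nonneg (show (0:ℝ) ≤ h^2/3 by positivity)]
        have e1 : |x2*u3| ≤ M2x*Mu3 := by
          rw [abs_mul]; exact mul_le_mul hx2M hu3M (abs_nonneg _) hM2x0
        have e2 : |1/4*x1^2*u4| ≤ M1x^2*Mu4/4 := by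
          rw [abs_mul, abs_mul, show |(1/4:ℝ)| = 1/4 from by norm_num,
            abs_of_nonneg (sq_nonneg x1)]
          have hx1sq : x1^2 ≤ M1x^2 := pow_le_pow_left₀ hx1pos.le hx1M 2
          have := mul_le_mul hx1sq hu4M (abs_nonneg _) (sq_nonneg M1x)
          linarith
        have h1 : |x2*u3 + 1/4*x1^2*u4| ≤ M2x*Mu3 + M1x^2*Mu4/4 := by
          calc |x2*u3 + 1/4*x1^2*u4| ≤ |x2*u3| + |1/4*x1^2*u4| := abs_add_le _ _
            _ ≤ M2x*Mu3 + M1x^2*Mu4/4 := add_le_add e1 e2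
        calc h^2/3 * |x2 * u3 + 1 / 4 * x1 ^ 2 * u4|
            ≤ h^2/3 * (M2x*Mu3 + M1x^2*Mu4/4) :=
              mul_le_mul_of_nonneg_left h1 (by positivity)
          _ = (M2x*Mu3 + M1x^2*Mu4/4)/3*h^2 := by ring
      have h5 : |ψ h q| ≤ CC*h^4 + (M2x*Mu3 + M1x^2*Mu4/4)/3*h^2 := by
        have e : ψ h q = (ψ h q + h ^ 2 / 3 * (x2 * u3 + 1 / 4 * x1 ^ 2 * u4))
            - h ^ 2 / 3 * (x2 * u3 + 1 / 4 * x1 ^ 2 * u4) := by ring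
        rw [e]
        calc |_ - _| ≤ |ψ h q + h ^ 2 / 3 * (x2 * u3 + 1 / 4 * x1 ^ 2 * u4)|
            + |h ^ 2 / 3 * (x2 * u3 + 1 / 4 * x1 ^ 2 * u4)| := abs_sub_le'' _ _
          _ ≤ CC*h^4 + (M2x*Mu3 + M1x^2*Mu4/4)/3*h^2 := add_le_add MAIN hZ
      have p1 : CC*h^4 ≤ CC*h^2 := mul_le_mul_of_nonneg_left hh42 hCC0.le
      calc |ψ h q| ≤ CC*h^4 + (M2x*Mu3 + M1x^2*Mu4/4)/3*h^2 := h5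
        _ ≤ CC*h^2 + (M2x*Mu3 + M1x^2*Mu4/4)/3*h^2 := by linarith
        _ = (CC + (M2x*Mu3 + M1x^2*Mu4/4)/3)*h^2 := by ring
        _ ≤ CC'*h^2 := by
            have e2 : CC + (M2x*Mu3 + M1x^2*Mu4/4)/3 ≤ CC' := by rw [hCC'def]; linarith
            exact mul_le_mul_of_nonneg_right e2 (by positivity)
  exact ⟨⟨CC, hCC0, fun h hh q hq => (KEY h hh q hq).1⟩,
    ⟨CC', hCC'0, fun h hh q hq => (KEY h hh q hq).2⟩⟩
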